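/- Let G = Q₈ and let s, s′, t, t′ ∈ {σ, τ, στ} with s ≠ t and s′ ≠ t′. Consider the groups A_{s,t} = ⟨λ(s), ρ(t)⟩ with G acting by conjugation via λ. There exists a G-equivariant group isomorphism A_{s,t} → A_{s′,t′} if and only if s = s′. -/

import Mathlib

abbrev G : Type := QuaternionGroup 2
def σ : G := QuaternionGroup.a 1
def τ : G := QuaternionGroup.xa 0
def lam (g : G) : Equiv.Perm G := Equiv.mulLeft g
def rho (g : G) : Equiv.Perm G := Equiv.mulRight g⁻¹
def Est (s t : G) : Subgroup (Equiv.Perm G) :=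
  Subgroup.closure {lam s * rho t, lam (s^2), lam t * rho (s*t)}
def Ast (s t : G) : Subgroup (Equiv.Perm G) :=
  Subgroup.closure {lam s, rho t}
def eta (s t : G) : Equiv.Perm G :=
  List.formPerm [1, s, t, (s*t)⁻¹, s^2, s⁻¹, t⁻¹, s*t]
def Cst (s t : G) : Subgroup (Equiv.Perm G) :=
  Subgroup.closure {eta s t}
def Dsl (s t : G) : Subgroup (Equiv.Perm G) :=
  Subgroup.closure {lam s, lam t * rho s}
def Dsr (s t : G) : Subgroup (Equiv.Perm G) :=
  Subgroup.closure {rho s, lam s * rho t}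
def lamG : Subgroup (Equiv.Perm G) := Subgroup.closure (Set.range lam)
def rhoG : Subgroup (Equiv.Perm G) := Subgroup.closure (Set.range rho)
/-- `f` is `G`-equivariant for the conjugation action of `G` via `lam`. -/
def Equivariant {N₁ N₂ : Subgroup (Equiv.Perm G)} (f : N₁ ≃* N₂) : Prop :=
  ∀ (g : G) (η : Equiv.Perm G) (hη : η ∈ N₁) (hη' : lam g * η * (lam g)⁻¹ ∈ N₁),
    (f ⟨lam g * η * (lam g)⁻¹, hη'⟩ : Equiv.Perm G)
      = lam g * (f ⟨η, hη⟩ : Equiv.Perm G) * (lam g)⁻¹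

/-! ### Auxiliary lemmas -/

lemma lam_mul (g h : G) : lam (g * h) = lam g * lam h := by
  ext x; simp [lam, mul_assoc]

lemma lam_one : lam 1 = 1 := by ext x; simp [lam]

lemma lam_inv (g : G) : lam g⁻¹ = (lam g)⁻¹ := by
  apply eq_inv_of_mul_eq_one_left; rw [← lam_mul, inv_mul_cancel, lam_one]

lemma lam_injective {g h : G} (hl : lam g = lam h) : g = h := by
  have := congrArg (fun e : Equiv.Perm G => e 1) hl
  simpa [lam] using this

lemma lam_rho_comm (g h : G) : lam g * rho h = rho h * lam g := by
  ext x; simp [lam, rho, mul_assoc]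

lemma comm_lemma (z s t : G) (h : z * s = s * z) :
    ∀ μ ∈ Ast s t, lam z * μ = μ * lam z := by
  intro μ hμ
  have : Commute (lam z) μ := by
    induction hμ using Subgroup.closure_induction with
    | mem x hx =>
        rcases hx with hx | hx
        · subst hx; unfold Commute SemiconjBy; rw [← lam_mul, h, lam_mul]
        · subst hx; exact lam_rho_comm z t
    | one => exact Commute.one_right _
    | mul x y hx hy ihx ihy => exact ihx.mul_right ihy
    | inv x hx ih => exact ih.inv_right
  exact this

lemma no_equiv {s t s' t' : G} (hconj : s' * s * s'⁻¹ = s⁻¹) (hs2 : s⁻¹ ≠ s)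
    (f : ↥(Ast s t) ≃* ↥(Ast s' t')) (hf : Equivariant f) : False := by
  have h1 : lam s ∈ Ast s t := Subgroup.subset_closure (Set.mem_insert _ _)
  have hls : lam s' * lam s * (lam s')⁻¹ = lam s⁻¹ := by
    rw [← lam_inv, ← lam_mul, ← lam_mul, hconj]
  have h2 : lam s' * lam s * (lam s')⁻¹ ∈ Ast s t := by
    rw [hls, lam_inv]; exact inv_mem h1
  have heq := hf s' (lam s) h1 h2
  have hcomm := comm_lemma s' s' t' rfl _ (f ⟨lam s, h1⟩).2
  have hval : (f ⟨lam s' * lam s * (lam s')⁻¹, h2⟩ : Equiv.Perm G)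
      = (f ⟨lam s, h1⟩ : Equiv.Perm G) := by
    rw [heq, hcomm, mul_inv_cancel_right]
  have := f.injective (Subtype.ext hval)
  have hv : lam s' * lam s * (lam s')⁻¹ = lam s := congrArg Subtype.val this
  rw [hls] at hv
  exact hs2 (lam_injective hv)

lemma build (s t t' : G) (c : Equiv.Perm G) (hmul : ∀ x y : G, c (x * y) = c x * c y)
    (hcs : c s = s) (hct : c t = t')
    (hcm : ∀ g : G, (g⁻¹ * c g) * s = s * (g⁻¹ * c g)) :
    ∃ f : ↥(Ast s t) ≃* ↥(Ast s t'), Equivariant f := by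
  have hc1 : c 1 = 1 := by
    have := hmul 1 1
    rw [mul_one] at this
    exact left_eq_mul.mp this
  have hcinv : ∀ x : G, c x⁻¹ = (c x)⁻¹ := by
    intro x
    apply eq_inv_of_mul_eq_one_right
    rw [← hmul, mul_inv_cancel, hc1]
  have hconj_lam : ∀ g : G, c * lam g * c⁻¹ = lam (c g) := by
    intro g; ext x
    simp only [Equiv.Perm.mul_apply, lam, Equiv.coe_mulLeft]
    rw [hmul, ← Equiv.Perm.mul_apply, mul_inv_cancel, Equiv.Perm.one_apply]
  have hconj_rho : ∀ h : G, c * rho h * c⁻¹ = rho (c h) := by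
    intro h; ext x
    simp only [Equiv.Perm.mul_apply, rho, Equiv.coe_mulRight]
    rw [hmul, hcinv, ← Equiv.Perm.mul_apply, mul_inv_cancel, Equiv.Perm.one_apply]
  have hmap : (Ast s t).map ((MulAut.conj c : MulAut (Equiv.Perm G)) :
      Equiv.Perm G →* Equiv.Perm G) = Ast s t' := by
    unfold Ast
    rw [MonoidHom.map_closure, Set.image_pair]
    congr 1
    rw [show ((MulAut.conj c : MulAut (Equiv.Perm G)) : Equiv.Perm G →* Equiv.Perm G) (lam s)
        = c * lam s * c⁻¹ from rfl,
      show ((MulAut.conj c : MulAut (Equiv.Perm G)) : Equiv.Perm G →* Equiv.Perm G) (rho t)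
        = c * rho t * c⁻¹ from rfl,
      hconj_lam, hconj_rho, hcs, hct]
  refine ⟨((MulAut.conj c : MulAut (Equiv.Perm G)).subgroupMap (Ast s t)).trans
    (MulEquiv.subgroupCongr hmap), ?_⟩
  have hcoe : ∀ (η : Equiv.Perm G) (hη : η ∈ Ast s t),
      ((((MulAut.conj c : MulAut (Equiv.Perm G)).subgroupMap (Ast s t)).trans
        (MulEquiv.subgroupCongr hmap)) ⟨η, hη⟩ : Equiv.Perm G) = c * η * c⁻¹ := by
    intro η hη; rfl
  intro g η hη hη'
  rw [hcoe, hcoe]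
  have step1 : c * (lam g * η * (lam g)⁻¹) * c⁻¹
      = lam (c g) * (c * η * c⁻¹) * (lam (c g))⁻¹ := by
    rw [← hconj_lam g]; group
  rw [step1]
  set μ := c * η * c⁻¹ with hμdef
  have hμ : μ ∈ Ast s t' := by
    rw [← hmap]
    exact Subgroup.mem_map.mpr ⟨η, hη, rfl⟩
  have hz := comm_lemma (g⁻¹ * c g) s t' (hcm g) μ hμ
  have hcg : lam (c g) = lam g * lam (g⁻¹ * c g) := by
    rw [← lam_mul, mul_inv_cancel_left]
  rw [hcg]
  have hfix : lam (g⁻¹ * c g) * μ * (lam (g⁻¹ * c g))⁻¹ = μ := by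
    rw [hz, mul_inv_cancel_right]
  calc lam g * lam (g⁻¹ * c g) * μ * (lam g * lam (g⁻¹ * c g))⁻¹
      = lam g * (lam (g⁻¹ * c g) * μ * (lam (g⁻¹ * c g))⁻¹) * (lam g)⁻¹ := by group
    _ = lam g * μ * (lam g)⁻¹ := by rw [hfix]

/-! ### The automorphisms of `G` used for the positive cases -/

def pp (i : ZMod 4) : Bool := i.val % 2 == 0
def fA : G → G | .a i => .a i | .xa i => .xa (i+3)
def fB : G → G | .a i => .a i | .xa i => .xa (i+1)
def fPhi : G → G
  | .a i => if pp i then .a i else .xa (i+2)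
  | .xa i => if pp i then .xa i else .a i
def fPsi : G → G
  | .a i => if pp i then .a i else .xa i
  | .xa i => if pp i then .xa i else .a (i+2)
def fChi : G → G
  | .a i => if pp i then .a i else .xa (i+3)
  | .xa i => if pp i then .a (i+3) else .xa i
def fChi' : G → G
  | .a i => if pp i then .a i else .xa (i+1)
  | .xa i => if pp i then .a (i+1) else .xa i

def cA : Equiv.Perm G := ⟨fA, fB, fun x => by revert x; decide, fun x => by revert x; decide⟩
def cB : Equiv.Perm G := ⟨fB, fA, fun x => by revert x; decide, fun x => by revert x; decide⟩
def cPhi : Equiv.Perm G := ⟨fPhi, fPsi, fun x => by revert x; decide, fun x => by revert x; decide⟩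
def cPsi : Equiv.Perm G := ⟨fPsi, fPhi, fun x => by revert x; decide, fun x => by revert x; decide⟩
def cChi : Equiv.Perm G := ⟨fChi, fChi', fun x => by revert x; decide, fun x => by revert x; decide⟩
def cChi' : Equiv.Perm G := ⟨fChi', fChi, fun x => by revert x; decide, fun x => by revert x; decide⟩

lemma hmulId : ∀ x y : G, (1 : Equiv.Perm G) (x*y) = (1 : Equiv.Perm G) x * (1 : Equiv.Perm G) y :=
  fun _ _ => rfl
lemma hmulA : ∀ x y : G, cA (x*y) = cA x * cA y := by decide
lemma hmulB : ∀ x y : G, cB (x*y) = cB x * cB y := by decide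
lemma hmulPhi : ∀ x y : G, cPhi (x*y) = cPhi x * cPhi y := by decide
lemma hmulPsi : ∀ x y : G, cPsi (x*y) = cPsi x * cPsi y := by decide
lemma hmulChi : ∀ x y : G, cChi (x*y) = cChi x * cChi y := by decide
lemma hmulChi' : ∀ x y : G, cChi' (x*y) = cChi' x * cChi' y := by decide

theorem stmt11 (s t s' t' : G)
    (hs : s ∈ ({σ, τ, σ * τ} : Set G)) (ht : t ∈ ({σ, τ, σ * τ} : Set G))
    (hs' : s' ∈ ({σ, τ, σ * τ} : Set G)) (ht' : t' ∈ ({σ, τ, σ * τ} : Set G))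
    (hst : s ≠ t) (hst' : s' ≠ t') :
    (∃ f : ↥(Ast s t) ≃* ↥(Ast s' t'), Equivariant f) ↔ s = s' := by
  simp only [Set.mem_insert_iff, Set.mem_singleton_iff] at hs ht hs' ht'
  rcases hs with rfl|rfl|rfl <;> rcases ht with rfl|rfl|rfl <;>
    rcases hs' with rfl|rfl|rfl <;> rcases ht' with rfl|rfl|rfl <;>
  first
    | exact absurd rfl hst
    | exact absurd rfl hst'
    | exact iff_of_false
        (fun h => no_equiv (by decide) (by decide) h.choose h.choose_spec) (by decide)
    | exact iff_of_true
        (build _ _ _ 1 hmulId (by decide) (by decide) (by decide)) rfl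
    | exact iff_of_true
        (build _ _ _ cA hmulA (by decide) (by decide) (by decide)) rfl
    | exact iff_of_true
        (build _ _ _ cB hmulB (by decide) (by decide) (by decide)) rfl
    | exact iff_of_true
        (build _ _ _ cPhi hmulPhi (by decide) (by decide) (by decide)) rfl
    | exact iff_of_true
        (build _ _ _ cPsi hmulPsi (by decide) (by decide) (by decide)) rfl
    | exact iff_of_true
        (build _ _ _ cChi hmulChi (by decide) (by decide) (by decide)) rfl
    | exact iff_of_true
        (build _ _ _ cChi' hmulChi' (by decide) (by decide) (by decide)) rfl
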